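/- Let n ≥ 1, γ ≥ 0, Γ ≥ 0, t ≥ 0, and fix q¹, …, qⁿ ∈ ℝ⁴ with ‖qʲ‖ = 1 for every j. The linear map on ℝ^{3n} × ℝ^{4n} given by (p, π¹, …, πⁿ) ↦ (e^{−γt}·p, exp(−Γ·t·J(q¹))·π¹, …, exp(−Γ·t·J(qⁿ))·πⁿ) — the exact time-t flow of the damping subsystem ṗ = −γp, π̇ʲ = −Γ J(qʲ) πʲ — has determinant exp(−n(3γ + Γ)·t). -/

import Mathlib

noncomputable section
open Matrix
open scoped InnerProductSpace BigOperators

/-- `S₁ q = (−q₁, q₀, q₃, −q₂)`. -/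
def S1 : Matrix (Fin 4) (Fin 4) ℝ := !![0,-1,0,0; 1,0,0,0; 0,0,0,1; 0,0,-1,0]
/-- `S₂ q = (−q₂, −q₃, q₀, q₁)`. -/
def S2 : Matrix (Fin 4) (Fin 4) ℝ := !![0,0,-1,0; 0,0,0,-1; 1,0,0,0; 0,1,0,0]
/-- `S₃ q = (−q₃, q₂, −q₁, q₀)`. -/
def S3 : Matrix (Fin 4) (Fin 4) ℝ := !![0,0,0,-1; 0,0,1,0; 0,-1,0,0; 1,0,0,0]
/-- The family `S l`, `l = 1, 2, 3` (0-indexed). -/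
def S : Fin 3 → Matrix (Fin 4) (Fin 4) ℝ := ![S1, S2, S3]

/-- `J(q) = (Σₗ (1/Iₗ) (Sₗ q)(Sₗ q)ᵀ) / (Σₗ 1/Iₗ)`. -/
def Jmat (I : Fin 3 → ℝ) (q : Fin 4 → ℝ) : Matrix (Fin 4) (Fin 4) ℝ :=
  (∑ l : Fin 3, 1 / I l)⁻¹ • ∑ l : Fin 3, (1 / I l) • vecMulVec (S l *ᵥ q) (S l *ᵥ q)

/-- `M = 4 / (Σₗ 1/Iₗ)`. -/
def Mc (I : Fin 3 → ℝ) : ℝ := 4 / ∑ l : Fin 3, 1 / I l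

/-- `λₗ = (1/Iₗ) / (Σₘ 1/Iₘ)`. -/
def lam (I : Fin 3 → ℝ) (l : Fin 3) : ℝ := (1 / I l) / ∑ m : Fin 3, 1 / I m

/-! ### Auxiliary lemmas -/

/-- Determinant of a product map is the product of determinants. -/
lemma det_prodMap' {ι κ M N : Type*} [Fintype ι] [Fintype κ] [DecidableEq ι] [DecidableEq κ]
    [AddCommGroup M] [AddCommGroup N] [Module ℝ M] [Module ℝ N]
    (bM : Module.Basis ι ℝ M) (bN : Module.Basis κ ℝ N) (f : M →ₗ[ℝ] M) (g : N →ₗ[ℝ] N) :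
    LinearMap.det (f.prodMap g) = LinearMap.det f * LinearMap.det g := by
  rw [← LinearMap.det_toMatrix (bM.prod bN), LinearMap.toMatrix_prodMap,
    Matrix.det_fromBlocks_zero₂₁, LinearMap.det_toMatrix, LinearMap.det_toMatrix]

/-- Determinant of a blockwise pi map. -/
lemma det_pi_blocks {n m : ℕ} (A : Fin n → Matrix (Fin m) (Fin m) ℝ) :
    LinearMap.det (LinearMap.pi fun j : Fin n =>
      (Matrix.toLin' (A j)).comp (LinearMap.proj j) :
      (Fin n → Fin m → ℝ) →ₗ[ℝ] (Fin n → Fin m → ℝ)) = ∏ j, (A j).det := by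
  classical
  set b := Pi.basis fun _ : Fin n => Pi.basisFun ℝ (Fin m)
  rw [← LinearMap.det_toMatrix b]
  let e : (Fin m × Fin n) ≃ ((_ : Fin n) × Fin m) :=
    ⟨fun p => ⟨p.2, p.1⟩, fun s => (s.2, s.1), fun _ => rfl, fun _ => rfl⟩
  have hM : LinearMap.toMatrix b b (LinearMap.pi fun j : Fin n =>
      (Matrix.toLin' (A j)).comp (LinearMap.proj j)) =
      Matrix.reindex e e (Matrix.blockDiagonal A) := by
    ext ⟨j, i⟩ ⟨j', i'⟩
    rw [LinearMap.toMatrix_apply]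
    simp [b, Pi.basis_repr, Pi.basis_apply, Matrix.toLin'_apply,
      Matrix.blockDiagonal_apply, Pi.single_apply, e, Equiv.coe_fn_symm_mk]
    by_cases h : j = j'
    · subst h; simp [Matrix.mulVec_single]
    · simp [h, Ne.symm h]
  rw [hM, Matrix.det_reindex_self, Matrix.det_blockDiagonal]

/-- The orthogonal matrix with columns `q, S₁q, S₂q, S₃q`. -/
def Qm (q : Fin 4 → ℝ) : Matrix (Fin 4) (Fin 4) ℝ :=
  Matrix.of fun i k => ![q, S 0 *ᵥ q, S 1 *ᵥ q, S 2 *ᵥ q] k i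

lemma Qm_ortho (q : Fin 4 → ℝ) (h : q 0 ^ 2 + q 1 ^ 2 + q 2 ^ 2 + q 3 ^ 2 = 1) :
    (Qm q)ᵀ * Qm q = 1 := by
  ext i k
  fin_cases i <;> fin_cases k <;>
    simp [Qm, S, S1, S2, S3, mul_apply, Fin.sum_univ_four, mulVec,
      Matrix.one_apply, dotProduct] <;> linarith [h]

lemma Jmat_decomp (I : Fin 3 → ℝ) (q : Fin 4 → ℝ) :
    Jmat I q = Qm q * diagonal ![0, lam I 0, lam I 1, lam I 2] * (Qm q)ᵀ := by
  ext i k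
  simp only [Jmat, lam, Qm, Matrix.mul_apply, Matrix.smul_apply, Matrix.sum_apply,
    Matrix.diagonal_apply, Matrix.transpose_apply, Matrix.of_apply, vecMulVec_apply,
    Fin.sum_univ_four, Fin.sum_univ_three, smul_eq_mul]
  simp [vecMulVec, Matrix.cons_val_zero, Matrix.cons_val_one]
  ring

lemma lam_sum (I : Fin 3 → ℝ) (hI : ∀ l, 0 < I l) :
    lam I 0 + lam I 1 + lam I 2 = 1 := by
  have h0 := hI 0; have h1 := hI 1; have h2 := hI 2
  have hs : (0:ℝ) < ∑ m : Fin 3, 1 / I m := by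
    rw [Fin.sum_univ_three]; positivity
  simp only [lam, Fin.sum_univ_three] at *
  field_simp

lemma det_exp_Jmat (I : Fin 3 → ℝ) (hI : ∀ l, 0 < I l) (q : Fin 4 → ℝ)
    (h : q 0 ^ 2 + q 1 ^ 2 + q 2 ^ 2 + q 3 ^ 2 = 1) (c : ℝ) :
    (NormedSpace.exp (c • Jmat I q)).det = Real.exp c := by
  have hQ := Qm_ortho q h
  have hQQ : Qm q * (Qm q)ᵀ = 1 := mul_eq_one_comm.mp hQ
  have hdet : (Qm q).det * (Qm q).det = 1 := by
    have := congrArg Matrix.det hQQ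
    rwa [Matrix.det_mul, Matrix.det_transpose, Matrix.det_one] at this
  have hunit : IsUnit (Qm q) :=
    (Matrix.isUnit_iff_isUnit_det _).mpr (IsUnit.of_mul_eq_one _ hdet)
  have hinv : (Qm q)⁻¹ = (Qm q)ᵀ := Matrix.inv_eq_left_inv hQ
  have hd : c • Jmat I q =
      Qm q * diagonal (fun k => c * (![0, lam I 0, lam I 1, lam I 2] k)) * (Qm q)⁻¹ := by
    rw [hinv, Jmat_decomp I q]
    have hv : (c • ![0, lam I 0, lam I 1, lam I 2]) =
        fun k => c * ![0, lam I 0, lam I 1, lam I 2] k := by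
      funext k; simp
    rw [← smul_mul_assoc, ← mul_smul_comm, ← Matrix.diagonal_smul, hv]
  rw [hd, Matrix.exp_conj (Qm q) _ hunit, Matrix.exp_diagonal, hinv]
  rw [Matrix.det_mul, Matrix.det_mul, mul_comm, ← mul_assoc, ← Matrix.det_mul, hQ,
    Matrix.det_one, one_mul, Matrix.det_diagonal]
  have hexp : ∀ x : Fin 4 → ℝ, ∀ k, NormedSpace.exp x k = Real.exp (x k) := by
    intro x k
    rw [Real.exp_eq_exp_ℝ]
    exact Pi.coe_exp x k
  simp only [hexp]
  rw [Fin.prod_univ_four]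
  simp only [Matrix.cons_val_zero, Matrix.cons_val_one, Matrix.head_cons,
    Matrix.cons_val_two, Matrix.tail_cons, Matrix.cons_val_three]
  rw [← Real.exp_add, ← Real.exp_add, ← Real.exp_add]
  rw [mul_zero]
  congr 1
  linear_combination c * lam_sum I hI

/-- The exact time-`t` flow of the damping subsystem `ṗ = −γ p`, `π̇ʲ = −Γ J(qʲ) πʲ`
has determinant `exp (−n (3γ + Γ) t)`. -/
theorem stmt12 (n : ℕ) (hn : 1 ≤ n) (I : Fin 3 → ℝ) (hI : ∀ l, 0 < I l)
    (γ Γ t : ℝ) (hγ : 0 ≤ γ) (hΓ : 0 ≤ Γ) (ht : 0 ≤ t)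
    (q : Fin n → EuclideanSpace ℝ (Fin 4)) (hq : ∀ j, ‖q j‖ = 1)
    (F : ((Fin n → Fin 3 → ℝ) × (Fin n → Fin 4 → ℝ)) →ₗ[ℝ]
         ((Fin n → Fin 3 → ℝ) × (Fin n → Fin 4 → ℝ)))
    (hF : ∀ (p : Fin n → Fin 3 → ℝ) (π : Fin n → Fin 4 → ℝ),
      F (p, π) = (fun j i => Real.exp (-(γ * t)) * p j i,
                  fun j => NormedSpace.exp ((-(Γ * t)) • Jmat I (q j)) *ᵥ π j)) :
    LinearMap.det F = Real.exp (-(n * (3 * γ + Γ)) * t) := by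
  classical
  -- norm condition
  have hsq : ∀ j, (q j) 0 ^ 2 + (q j) 1 ^ 2 + (q j) 2 ^ 2 + (q j) 3 ^ 2 = 1 := by
    intro j
    have h1 : ‖q j‖ ^ 2 = 1 := by rw [hq j]; norm_num
    rw [EuclideanSpace.norm_eq, Real.sq_sqrt (by positivity)] at h1
    simpa [Fin.sum_univ_four, Real.norm_eq_abs, sq_abs] using h1
  set E : Fin n → Matrix (Fin 4) (Fin 4) ℝ :=
    fun j => NormedSpace.exp ((-(Γ * t)) • Jmat I (q j)) with hE
  set A : (Fin n → Fin 3 → ℝ) →ₗ[ℝ] (Fin n → Fin 3 → ℝ) :=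
    Real.exp (-(γ * t)) • LinearMap.id with hA
  set B : (Fin n → Fin 4 → ℝ) →ₗ[ℝ] (Fin n → Fin 4 → ℝ) :=
    LinearMap.pi fun j => (Matrix.toLin' (E j)).comp (LinearMap.proj j) with hB
  have hFe : F = A.prodMap B := by
    apply LinearMap.ext
    rintro ⟨p, π⟩
    rw [hF p π]
    simp only [LinearMap.prodMap_apply, Prod.mk.injEq]
    constructor
    · funext j i
      simp [hA]
    · funext j
      simp [hB, hE, Matrix.toLin'_apply, neg_smul]
  rw [hFe, det_prodMap' (Pi.basis fun _ : Fin n => Pi.basisFun ℝ (Fin 3))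
    (Pi.basis fun _ : Fin n => Pi.basisFun ℝ (Fin 4))]
  have hdetA : LinearMap.det A = Real.exp (-(γ * t)) ^ (n * 3) := by
    rw [hA, LinearMap.det_smul, LinearMap.det_id, mul_one]
    congr 1
    simp [Module.finrank_pi_fintype, Module.finrank_pi]
  have hdetB : LinearMap.det B = Real.exp (-(Γ * t)) ^ n := by
    rw [hB, det_pi_blocks]
    have : ∀ j, (E j).det = Real.exp (-(Γ * t)) := fun j =>
      det_exp_Jmat I hI (q j) (hsq j) _
    simp [this]
  rw [hdetA, hdetB, ← Real.exp_nat_mul, ← Real.exp_nat_mul, ← Real.exp_add]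
  congr 1
  push_cast
  ring
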